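/- Let V be a 2-dimensional complex vector space with nonzero η ∈ Λ²V*, and let W ⊆ V^k be a k-dimensional subspace Lagrangian for η_k = Σᵢ prᵢ*η. Suppose the kernel of the projection π : W → V^{k-1} onto the last k−1 factors has dimension at most 1. Then there exists a linear form μ on V such that W_μ := W ∩ ker(pr₁*μ) has dimension k−1 and is mapped injectively by π onto a subspace of V^{k-1} that is Lagrangian for η_{k-1}. -/

import Mathlib

open Module


section Aux

variable {V : Type*} [AddCommGroup V] [Module ℂ V]

/-- An alternating bilinear form is skew. -/
lemma aux_skew (η : V →ₗ[ℂ] V →ₗ[ℂ] ℂ) (hη_alt : ∀ v, η v v = 0) (a b : V) :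
    η a b = - η b a := by
  have h := hη_alt (a + b)
  simp only [map_add, LinearMap.add_apply, hη_alt] at h
  linear_combination h

/-- An alternating bilinear form vanishes on pairs from a subspace of dimension ≤ 1. -/
lemma aux_collinear [FiniteDimensional ℂ V] (η : V →ₗ[ℂ] V →ₗ[ℂ] ℂ)
    (hη_alt : ∀ v, η v v = 0) {S : Submodule ℂ V} (hS : finrank ℂ S ≤ 1)
    {a b : V} (ha : a ∈ S) (hb : b ∈ S) : η a b = 0 := by
  by_cases ha0 : a = 0
  · simp [ha0]
  have hsp : (ℂ ∙ a) = S := by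
    apply Submodule.eq_of_le_of_finrank_le
    · rwa [Submodule.span_singleton_le_iff_mem]
    · rwa [finrank_span_singleton ha0]
  rw [← hsp, Submodule.mem_span_singleton] at hb
  obtain ⟨c, rfl⟩ := hb
  simp [hη_alt]

/-- A nonzero alternating form on a 2-dimensional space is nondegenerate. -/
lemma aux_inj (hV : finrank ℂ V = 2) (η : V →ₗ[ℂ] V →ₗ[ℂ] ℂ)
    (hη_alt : ∀ v, η v v = 0) (hη_ne : η ≠ 0) {x : V} (hx : η x = 0) : x = 0 := by
  have : FiniteDimensional ℂ V := FiniteDimensional.of_finrank_pos (by omega)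
  by_contra hx0
  have hxker : x ∈ LinearMap.ker η := hx
  have hsp : (ℂ ∙ x) ≤ LinearMap.ker η := by rwa [Submodule.span_singleton_le_iff_mem]
  have h1 : 1 ≤ finrank ℂ (LinearMap.ker η) := by
    have := Submodule.finrank_mono hsp
    rwa [finrank_span_singleton hx0] at this
  have hrn := LinearMap.finrank_range_add_finrank_ker η
  rw [hV] at hrn
  have hr1 : finrank ℂ (LinearMap.range η) ≤ 1 := by omega
  obtain ⟨a, ha⟩ : ∃ a, η a ≠ 0 := by
    by_contra h
    push_neg at h
    exact hη_ne (by ext a b; simp [h])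
  obtain ⟨b, hb⟩ : ∃ b, η a b ≠ 0 := by
    by_contra h
    push_neg at h
    exact ha (by ext b; simp [h])
  have hspr : (ℂ ∙ (η a)) = LinearMap.range η := by
    apply Submodule.eq_of_le_of_finrank_le
    · rw [Submodule.span_singleton_le_iff_mem]; exact LinearMap.mem_range_self η a
    · rwa [finrank_span_singleton ha]
  have hbr : η b ∈ (ℂ ∙ (η a)) := hspr ▸ LinearMap.mem_range_self η b
  rw [Submodule.mem_span_singleton] at hbr
  obtain ⟨c, hc⟩ := hbr
  have h2 : η b a = 0 := by
    rw [← hc]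
    simp [hη_alt]
  rw [aux_skew η hη_alt b a, neg_eq_zero] at h2
  exact hb h2

end Aux

/-- A linear functional taking a nonzero value has kernel of codimension one. -/
lemma aux_ker_codim {V : Type*} [AddCommGroup V] [Module ℂ V] [FiniteDimensional ℂ V]
    (f : V →ₗ[ℂ] ℂ) {v : V} (hv : f v ≠ 0) :
    finrank ℂ (LinearMap.ker f) + 1 = finrank ℂ V := by
  have hne : LinearMap.range f ≠ ⊥ := by
    intro hbot
    apply hv
    have : f v ∈ (⊥ : Submodule ℂ ℂ) := hbot ▸ LinearMap.mem_range_self f v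
    simpa using this
  have h1 : finrank ℂ (LinearMap.range f) ≤ 1 := by
    simpa using Submodule.finrank_le (LinearMap.range f)
  have h2 : finrank ℂ (LinearMap.range f) ≠ 0 := fun h0 =>
    hne (Submodule.finrank_eq_zero.mp h0)
  have := LinearMap.finrank_range_add_finrank_ker f
  omega

/-- Let `V` be a 2-dimensional complex vector space with nonzero `η ∈ Λ²V*`, and
`W ⊆ V^k` a `k`-dimensional subspace which is Lagrangian for `η_k = Σᵢ prᵢ*η`.
If the kernel of the projection `π : W → V^{k-1}` onto the last `k-1` factors has
dimension at most `1`, then there is a linear form `μ` on `V` such that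
`W_μ := W ∩ ker (pr₁*μ)` has dimension `k-1`, is mapped injectively by `π`, and its
image is Lagrangian (isotropic of dimension `k-1`) for `η_{k-1}`. -/
theorem stmt1 {V : Type*} [AddCommGroup V] [Module ℂ V]
    (hV : finrank ℂ V = 2)
    (η : V →ₗ[ℂ] V →ₗ[ℂ] ℂ) (hη_alt : ∀ v, η v v = 0) (hη_ne : η ≠ 0)
    (k : ℕ) (hk : 0 < k)
    (W : Submodule ℂ (Fin k → V)) (hdim : finrank ℂ W = k)
    (hLag : ∀ v ∈ W, ∀ w ∈ W, ∑ i, η (v i) (w i) = 0)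
    (π : (Fin k → V) →ₗ[ℂ] (Fin (k - 1) → V))
    (hπ : π = LinearMap.funLeft ℂ V
      (fun i : Fin (k - 1) => (⟨i.1 + 1, by have := i.2; omega⟩ : Fin k)))
    (hker : finrank ℂ ↥(W ⊓ LinearMap.ker π) ≤ 1) :
    ∃ μ : V →ₗ[ℂ] ℂ,
      finrank ℂ ↥(W ⊓ LinearMap.ker (μ ∘ₗ LinearMap.proj (⟨0, hk⟩ : Fin k))) = k - 1 ∧
      Set.InjOn π
        ((W ⊓ LinearMap.ker (μ ∘ₗ LinearMap.proj (⟨0, hk⟩ : Fin k)) : Submodule ℂ _) :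
          Set (Fin k → V)) ∧
      ∀ x ∈ W ⊓ LinearMap.ker (μ ∘ₗ LinearMap.proj (⟨0, hk⟩ : Fin k)),
        ∀ y ∈ W ⊓ LinearMap.ker (μ ∘ₗ LinearMap.proj (⟨0, hk⟩ : Fin k)),
          ∑ i : Fin (k - 1), η (π x i) (π y i) = 0 := by
  have hVfd : FiniteDimensional ℂ V := FiniteDimensional.of_finrank_pos (by omega)
  obtain ⟨n, rfl⟩ : ∃ n, k = n + 1 := ⟨k - 1, by omega⟩
  set e0 : Fin (n + 1) := ⟨0, hk⟩ with he0
  have hπapp : ∀ (x : Fin (n+1) → V) (i : Fin (n+1-1)), π x i = x i.succ := by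
    subst hπ; intro x i; rfl
  have hπmem : ∀ x ∈ LinearMap.ker π, ∀ i : Fin n, x i.succ = 0 := by
    intro x hx i
    have := congrFun (LinearMap.mem_ker.mp hx) i
    rwa [hπapp] at this
  -- the first projection does not kill W
  have hpr : ∃ w ∈ W, w e0 ≠ 0 := by
    by_contra h
    push_neg at h
    set B : LinearMap.BilinForm ℂ (Fin (n+1-1) → V) :=
      ∑ i : Fin (n+1-1), η.compl₁₂ (LinearMap.proj i) (LinearMap.proj i) with hBdef
    have hB : ∀ x y, B x y = ∑ i, η (x i) (y i) := by
      intro x y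
      simp [hBdef, LinearMap.sum_apply, LinearMap.compl₁₂_apply]
    have hBrefl : B.IsRefl := by
      intro x y hxy
      rw [hB] at hxy ⊢
      have h2 : ∑ i, η (y i) (x i) = - ∑ i, η (x i) (y i) := by
        rw [← Finset.sum_neg_distrib]
        exact Finset.sum_congr rfl fun i _ => by rw [aux_skew η hη_alt]
      rw [h2, hxy, neg_zero]
    have hBnd : B.Nondegenerate := by
      refine (LinearMap.IsRefl.nondegenerate_iff_separatingLeft hBrefl).mpr ?_
      intro x hx
      funext i
      refine aux_inj hV η hη_alt hη_ne ?_
      ext v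
      have h3 := hx (Pi.single i v)
      rw [hB, Finset.sum_eq_single i (fun j _ hj => by
        rw [Pi.single_eq_of_ne hj, map_zero]) (by simp)] at h3
      rwa [Pi.single_eq_same] at h3
    let g := π.domRestrict W
    have hgker : LinearMap.ker g = ⊥ := by
      rw [eq_bot_iff]
      rintro ⟨x, hxW⟩ hx
      have hx' : π x = 0 := hx
      have hx0 : x = 0 := by
        funext j
        refine Fin.cases ?_ ?_ j
        · exact h x hxW
        · intro i
          have := congrFun hx' i
          rwa [hπapp] at this
      simp only [Submodule.mem_bot]
      exact Subtype.ext hx0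
    have hU : finrank ℂ (LinearMap.range g) = n + 1 := by
      have := LinearMap.finrank_range_add_finrank_ker g
      rw [hgker, finrank_bot, hdim] at this
      omega
    have hUiso : LinearMap.range g ≤ B.orthogonal (LinearMap.range g) := by
      rintro u ⟨⟨x, hxW⟩, rfl⟩
      rintro u' ⟨⟨x', hxW'⟩, rfl⟩
      show B (π x') (π x) = 0
      rw [hB]
      have hsum := hLag x' hxW' x hxW
      rw [Fin.sum_univ_succ] at hsum
      have h0 : x' (0 : Fin (n+1)) = 0 := h x' hxW'
      rw [h0, map_zero, LinearMap.zero_apply, zero_add] at hsum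
      calc ∑ i : Fin n, η (π x' i) (π x i)
          = ∑ i : Fin n, η (x' i.succ) (x i.succ) :=
            Finset.sum_congr rfl fun i _ => by rw [hπapp, hπapp]
        _ = 0 := hsum
    have hmono := Submodule.finrank_mono hUiso
    have horth := LinearMap.BilinForm.finrank_orthogonal hBnd (LinearMap.range g)
    have htot : finrank ℂ (Fin (n+1-1) → V) = n * 2 := by
      simp [Module.finrank_pi_fintype, hV]
    have hle := Submodule.finrank_le (LinearMap.range g)
    rw [htot] at horth hle
    omega
  -- choose μ
  obtain ⟨μ, hμ1, hμ2⟩ : ∃ μ : V →ₗ[ℂ] ℂ, (∃ w ∈ W, μ (w e0) ≠ 0) ∧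
      (∀ x ∈ W ⊓ LinearMap.ker π, μ (x e0) = 0 → x = 0) := by
    have hdual : ∀ v : V, v ≠ 0 → ∃ μ : V →ₗ[ℂ] ℂ, μ v ≠ 0 := by
      intro v hv
      by_contra hc
      push_neg at hc
      exact hv ((Module.forall_dual_apply_eq_zero_iff ℂ v).mp hc)
    rcases eq_or_ne (W ⊓ LinearMap.ker π) ⊥ with hK | hK
    · obtain ⟨w, hwW, hw0⟩ := hpr
      obtain ⟨μ, hμ⟩ := hdual _ hw0
      exact ⟨μ, ⟨w, hwW, hμ⟩, fun x hx _ => by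
        rw [hK] at hx; simpa using hx⟩
    · obtain ⟨z, hzK, hz0⟩ := Submodule.exists_mem_ne_zero_of_ne_bot hK
      have hz00 : z e0 ≠ 0 := by
        intro hz
        apply hz0
        funext j
        refine Fin.cases ?_ ?_ j
        · exact hz
        · exact hπmem z hzK.2
      obtain ⟨μ, hμ⟩ := hdual _ hz00
      refine ⟨μ, ⟨z, hzK.1, hμ⟩, ?_⟩
      intro x hx hx0
      have hKsp : (ℂ ∙ z) = W ⊓ LinearMap.ker π := by
        apply Submodule.eq_of_le_of_finrank_le
        · rwa [Submodule.span_singleton_le_iff_mem]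
        · rwa [finrank_span_singleton hz0]
      rw [← hKsp, Submodule.mem_span_singleton] at hx
      obtain ⟨c, rfl⟩ := hx
      have hc0 : c * μ (z e0) = 0 := by simpa using hx0
      rcases mul_eq_zero.mp hc0 with hc | hc
      · rw [hc, zero_smul]
      · exact absurd hc hμ
  refine ⟨μ, ?_, ?_, ?_⟩
  · -- dimension count
    set f : (Fin (n+1) → V) →ₗ[ℂ] ℂ := μ ∘ₗ LinearMap.proj e0 with hfdef
    obtain ⟨w, hwW, hw0⟩ := hμ1
    have hg0 : (f.domRestrict W) ⟨w, hwW⟩ ≠ 0 := hw0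
    have hkerg := aux_ker_codim (f.domRestrict W) hg0
    rw [hdim] at hkerg
    have hSeq : W ⊓ LinearMap.ker f = (LinearMap.ker (f.domRestrict W)).map W.subtype := by
      rw [LinearMap.ker_domRestrict, Submodule.map_comap_subtype]
    rw [hSeq, Submodule.finrank_map_subtype_eq]
    omega
  · -- injectivity
    intro x hx y hy hxy
    simp only [SetLike.mem_coe, Submodule.mem_inf, LinearMap.mem_ker,
      LinearMap.comp_apply, LinearMap.proj_apply] at hx hy
    have hπd : π (x - y) = 0 := by rw [map_sub, sub_eq_zero]; exact hxy
    have hd : x - y ∈ W ⊓ LinearMap.ker π :=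
      Submodule.mem_inf.mpr ⟨W.sub_mem hx.1 hy.1, LinearMap.mem_ker.mpr hπd⟩
    have hd0 : μ ((x - y) e0) = 0 := by
      have h4 : (x - y) e0 = x e0 - y e0 := rfl
      rw [h4, map_sub, hx.2, hy.2, sub_zero]
    exact sub_eq_zero.mp (hμ2 _ hd hd0)
  · -- isotropy
    intro x hx y hy
    simp only [Submodule.mem_inf, LinearMap.mem_ker,
      LinearMap.comp_apply, LinearMap.proj_apply] at hx hy
    obtain ⟨w, hwW, hw0⟩ := hμ1
    have hkerμ : finrank ℂ (LinearMap.ker μ) ≤ 1 := by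
      have := aux_ker_codim μ hw0
      omega
    have h00 : η (x e0) (y e0) = 0 :=
      aux_collinear η hη_alt hkerμ (LinearMap.mem_ker.mpr hx.2) (LinearMap.mem_ker.mpr hy.2)
    have hsum := hLag x hx.1 y hy.1
    rw [Fin.sum_univ_succ] at hsum
    have h0eq : η (x (0 : Fin (n+1))) (y (0 : Fin (n+1))) = 0 := h00
    rw [h0eq, zero_add] at hsum
    calc ∑ i : Fin (n+1-1), η (π x i) (π y i)
        = ∑ i : Fin n, η (x i.succ) (y i.succ) :=
          Finset.sum_congr rfl fun i _ => by rw [hπapp, hπapp]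
      _ = 0 := hsum
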